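/- Let P, Q be probability distributions on a finite set X, π ∈ (0,1/2], and suppose e_π(P,Q) ∈ (0,π). Then for any δ with e_π(P,Q) ≤ δ < π, setting λ* = log((1−π)/δ)/(log((1−π)/δ)+log(π/δ)), we have δ ≥ (1/4) π^{λ*} (1−π)^{1−λ*} (β_{λ*}(P,Q))². -/

import Mathlib

open Real Finset

/-- Hellinger-λ affinity between two distributions on a finite set. -/
noncomputable def betaAff {X : Type*} [Fintype X] (l : ℝ) (P Q : X → ℝ) : ℝ :=
  ∑ x, P x ^ l * Q x ^ (1 - l)

/-- Optimal one-shot Bayes error with prior pr. -/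
noncomputable def bayesErr {X : Type*} [Fintype X] (pr : ℝ) (P Q : X → ℝ) : ℝ :=
  ∑ x, min (pr * P x) ((1 - pr) * Q x)

/-- The optimal exponent λ* of the one-shot Bayes error lower bound. -/
noncomputable def lambdaStar (pr δ : ℝ) : ℝ :=
  Real.log ((1 - pr) / δ) / (Real.log ((1 - pr) / δ) + Real.log (pr / δ))

/-- Hölder's inequality in the form `∑ f^l g^(1-l) ≤ (∑ f)^l (∑ g)^(1-l)`. -/
lemma holder_split {X : Type*} (s : Finset X) (f g : X → ℝ)
    (hf : ∀ x, 0 ≤ f x) (hg : ∀ x, 0 ≤ g x) (l : ℝ) (hl0 : 0 < l) (hl1 : l < 1) :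
    ∑ x ∈ s, f x ^ l * g x ^ (1 - l) ≤ (∑ x ∈ s, f x) ^ l * (∑ x ∈ s, g x) ^ (1 - l) := by
  have hl1' : 0 < 1 - l := by linarith
  have hpq : Real.HolderConjugate (1/l) (1/(1-l)) := by
    rw [Real.holderConjugate_iff]; constructor
    · rw [lt_div_iff₀ hl0]; linarith
    · rw [one_div, one_div, inv_inv, inv_inv]; ring
  have h := Real.inner_le_Lp_mul_Lq_of_nonneg s hpq
    (f := fun x => f x ^ l) (g := fun x => g x ^ (1-l))
    (fun i _ => Real.rpow_nonneg (hf i) _) (fun i _ => Real.rpow_nonneg (hg i) _)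
  have e1 : ∀ x : X, (f x ^ l) ^ (1/l) = f x := fun x => by
    rw [← Real.rpow_mul (hf x), mul_one_div_cancel hl0.ne', Real.rpow_one]
  have e2 : ∀ x : X, (g x ^ (1-l)) ^ (1/(1-l)) = g x := fun x => by
    rw [← Real.rpow_mul (hg x), mul_one_div_cancel hl1'.ne', Real.rpow_one]
  have d1 : (1:ℝ) / (1/l) = l := by field_simp
  have d2 : (1:ℝ) / (1/(1-l)) = 1 - l := by field_simp
  simp only [e1, e2, d1, d2] at h
  exact h

theorem one_shot_lower_bound_general {X : Type*} [Fintype X]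
    (P Q : X → ℝ) (hP0 : ∀ x, 0 ≤ P x) (hQ0 : ∀ x, 0 ≤ Q x)
    (hP1 : ∑ x, P x = 1) (hQ1 : ∑ x, Q x = 1)
    (pr : ℝ) (hpr : pr ∈ Set.Ioc (0 : ℝ) (1 / 2))
    (he : bayesErr pr P Q ∈ Set.Ioo (0 : ℝ) pr)
    (δ : ℝ) (hδ1 : bayesErr pr P Q ≤ δ) (hδ2 : δ < pr) :
    δ ≥ (1 / 4) * pr ^ lambdaStar pr δ * (1 - pr) ^ (1 - lambdaStar pr δ) *
      (betaAff (lambdaStar pr δ) P Q) ^ 2 := by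
  classical
  obtain ⟨hpr0, hpr12⟩ := hpr
  obtain ⟨he0, _⟩ := he
  set l := lambdaStar pr δ with hl
  have hδ0 : 0 < δ := lt_of_lt_of_le he0 hδ1
  have hq0 : (0:ℝ) < 1 - pr := by linarith
  have hprq : pr ≤ 1 - pr := by linarith
  -- the two logs
  set A := Real.log ((1 - pr) / δ) with hA
  set B := Real.log (pr / δ) with hB
  have hB0 : 0 < B := Real.log_pos (by rw [lt_div_iff₀ hδ0]; linarith)
  have hAB : B ≤ A := by
    apply Real.log_le_log (by positivity)
    gcongr
  have hA0 : 0 < A := lt_of_lt_of_le hB0 hAB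
  have hABpos : 0 < A + B := by linarith
  have hlval : l = A / (A + B) := rfl
  have hl0 : 0 < l := by rw [hlval]; positivity
  have hl1 : l < 1 := by
    rw [hlval, div_lt_one hABpos]; linarith
  have hl1' : 0 < 1 - l := by linarith
  -- the key identity: pr^l * δ^(1-l) = δ^l * (1-pr)^(1-l)
  have hkey : pr ^ l * δ ^ (1 - l) = δ ^ l * (1 - pr) ^ (1 - l) := by
    rw [Real.rpow_def_of_pos hpr0, Real.rpow_def_of_pos hδ0,
      Real.rpow_def_of_pos hδ0, Real.rpow_def_of_pos hq0, ← Real.exp_add, ← Real.exp_add]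
    congr 1
    have hAeq : A = Real.log (1 - pr) - Real.log δ := by
      rw [hA, Real.log_div hq0.ne' hδ0.ne']
    have hBeq : B = Real.log pr - Real.log δ := by
      rw [hB, Real.log_div hpr0.ne' hδ0.ne']
    have hlid : l * B = (1 - l) * A := by
      rw [hlval]; field_simp; ring
    have := hlid
    rw [hBeq, hAeq] at this
    ring_nf
    ring_nf at this
    linarith
  -- set up the split
  set S := Finset.univ.filter (fun x => pr * P x ≤ (1 - pr) * Q x) with hS
  set D := pr ^ l * (1 - pr) ^ (1 - l) with hD
  have hD0 : 0 < D := by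
    rw [hD]; positivity
  have hPx : ∀ x, 0 ≤ pr * P x := fun x => mul_nonneg hpr0.le (hP0 x)
  have hQx : ∀ x, 0 ≤ (1 - pr) * Q x := fun x => mul_nonneg hq0.le (hQ0 x)
  have hmin0 : ∀ x, 0 ≤ min (pr * P x) ((1 - pr) * Q x) := fun x =>
    le_min (hPx x) (hQx x)
  -- pointwise: (pr*P)^l * ((1-pr)*Q)^(1-l) = D * (P^l * Q^(1-l))
  have hpt : ∀ x : X, (pr * P x) ^ l * ((1 - pr) * Q x) ^ (1 - l)
      = D * (P x ^ l * Q x ^ (1 - l)) := fun x => by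
    rw [Real.mul_rpow hpr0.le (hP0 x), Real.mul_rpow hq0.le (hQ0 x), hD]; ring
  -- bound on S
  have hsumS_P : ∑ x ∈ S, pr * P x ≤ δ := by
    calc ∑ x ∈ S, pr * P x = ∑ x ∈ S, min (pr * P x) ((1 - pr) * Q x) := by
          apply Finset.sum_congr rfl
          intro x hx
          rw [hS, Finset.mem_filter] at hx
          rw [min_eq_left hx.2]
      _ ≤ ∑ x, min (pr * P x) ((1 - pr) * Q x) :=
          Finset.sum_le_sum_of_subset_of_nonneg (Finset.subset_univ S)
            (fun x _ _ => hmin0 x)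
      _ ≤ δ := hδ1
  have hsumS_Q : ∑ x ∈ S, (1 - pr) * Q x ≤ 1 - pr := by
    calc ∑ x ∈ S, (1 - pr) * Q x ≤ ∑ x, (1 - pr) * Q x :=
          Finset.sum_le_sum_of_subset_of_nonneg (Finset.subset_univ S)
            (fun x _ _ => hQx x)
      _ = 1 - pr := by rw [← Finset.mul_sum, hQ1, mul_one]
  -- bound on Sᶜ
  have hsumSc_P : ∑ x ∈ Sᶜ, pr * P x ≤ pr := by
    calc ∑ x ∈ Sᶜ, pr * P x ≤ ∑ x, pr * P x :=
          Finset.sum_le_sum_of_subset_of_nonneg (Finset.subset_univ _)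
            (fun x _ _ => hPx x)
      _ = pr := by rw [← Finset.mul_sum, hP1, mul_one]
  have hsumSc_Q : ∑ x ∈ Sᶜ, (1 - pr) * Q x ≤ δ := by
    calc ∑ x ∈ Sᶜ, (1 - pr) * Q x = ∑ x ∈ Sᶜ, min (pr * P x) ((1 - pr) * Q x) := by
          apply Finset.sum_congr rfl
          intro x hx
          rw [Finset.mem_compl, hS, Finset.mem_filter] at hx
          push_neg at hx
          rw [min_eq_right (hx (Finset.mem_univ x)).le]
      _ ≤ ∑ x, min (pr * P x) ((1 - pr) * Q x) :=
          Finset.sum_le_sum_of_subset_of_nonneg (Finset.subset_univ _)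
            (fun x _ _ => hmin0 x)
      _ ≤ δ := hδ1
  -- Hölder on each piece
  have hHS : ∑ x ∈ S, (pr * P x) ^ l * ((1 - pr) * Q x) ^ (1 - l)
      ≤ δ ^ l * (1 - pr) ^ (1 - l) := by
    calc ∑ x ∈ S, (pr * P x) ^ l * ((1 - pr) * Q x) ^ (1 - l)
        ≤ (∑ x ∈ S, pr * P x) ^ l * (∑ x ∈ S, (1 - pr) * Q x) ^ (1 - l) :=
          holder_split S _ _ hPx hQx l hl0 hl1
      _ ≤ δ ^ l * (1 - pr) ^ (1 - l) := by
          apply mul_le_mul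
          · exact Real.rpow_le_rpow (Finset.sum_nonneg (fun x _ => hPx x)) hsumS_P hl0.le
          · exact Real.rpow_le_rpow (Finset.sum_nonneg (fun x _ => hQx x)) hsumS_Q hl1'.le
          · exact Real.rpow_nonneg (Finset.sum_nonneg (fun x _ => hQx x)) _
          · exact Real.rpow_nonneg hδ0.le _
  have hHSc : ∑ x ∈ Sᶜ, (pr * P x) ^ l * ((1 - pr) * Q x) ^ (1 - l)
      ≤ pr ^ l * δ ^ (1 - l) := by
    calc ∑ x ∈ Sᶜ, (pr * P x) ^ l * ((1 - pr) * Q x) ^ (1 - l)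
        ≤ (∑ x ∈ Sᶜ, pr * P x) ^ l * (∑ x ∈ Sᶜ, (1 - pr) * Q x) ^ (1 - l) :=
          holder_split Sᶜ _ _ hPx hQx l hl0 hl1
      _ ≤ pr ^ l * δ ^ (1 - l) := by
          apply mul_le_mul
          · exact Real.rpow_le_rpow (Finset.sum_nonneg (fun x _ => hPx x)) hsumSc_P hl0.le
          · exact Real.rpow_le_rpow (Finset.sum_nonneg (fun x _ => hQx x)) hsumSc_Q hl1'.le
          · exact Real.rpow_nonneg (Finset.sum_nonneg (fun x _ => hQx x)) _
          · exact Real.rpow_nonneg hpr0.le _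
  -- combine: D * β ≤ 2 * pr^l * δ^(1-l)
  have hsplit : D * betaAff l P Q
      = (∑ x ∈ S, (pr * P x) ^ l * ((1 - pr) * Q x) ^ (1 - l))
        + ∑ x ∈ Sᶜ, (pr * P x) ^ l * ((1 - pr) * Q x) ^ (1 - l) := by
    rw [Finset.sum_add_sum_compl]
    unfold betaAff
    rw [Finset.mul_sum]
    exact Finset.sum_congr rfl (fun x _ => (hpt x).symm)
  have hmain : D * betaAff l P Q ≤ 2 * (pr ^ l * δ ^ (1 - l)) := by
    rw [hsplit]
    calc _ ≤ δ ^ l * (1 - pr) ^ (1 - l) + pr ^ l * δ ^ (1 - l) := add_le_add hHS hHSc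
      _ = 2 * (pr ^ l * δ ^ (1 - l)) := by rw [← hkey]; ring
  -- β ≥ 0
  have hβ0 : 0 ≤ betaAff l P Q := by
    unfold betaAff
    exact Finset.sum_nonneg (fun x _ => mul_nonneg (Real.rpow_nonneg (hP0 x) _)
      (Real.rpow_nonneg (hQ0 x) _))
  -- square the bound
  have hsq : (D * betaAff l P Q) ^ 2 ≤ 4 * (D * δ) := by
    have h1 : (D * betaAff l P Q) ^ 2 ≤ (2 * (pr ^ l * δ ^ (1 - l))) ^ 2 := by
      apply pow_le_pow_left₀ (by positivity) hmain
    have h2 : (2 * (pr ^ l * δ ^ (1 - l))) ^ 2 = 4 * (D * δ) := by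
      have : (pr ^ l * δ ^ (1 - l)) * (pr ^ l * δ ^ (1 - l))
          = (pr ^ l * δ ^ (1 - l)) * (δ ^ l * (1 - pr) ^ (1 - l)) := by rw [← hkey]
      have hdd : δ ^ (1 - l) * δ ^ l = δ := by
        rw [← Real.rpow_add hδ0]; norm_num
      calc (2 * (pr ^ l * δ ^ (1 - l))) ^ 2
          = 4 * ((pr ^ l * δ ^ (1 - l)) * (pr ^ l * δ ^ (1 - l))) := by ring
        _ = 4 * ((pr ^ l * δ ^ (1 - l)) * (δ ^ l * (1 - pr) ^ (1 - l))) := by rw [this]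
        _ = 4 * ((pr ^ l * (1 - pr) ^ (1 - l)) * (δ ^ (1 - l) * δ ^ l)) := by ring
        _ = 4 * (D * δ) := by rw [hdd, hD]
    linarith
  -- finish
  have hfinal : (1 / 4) * D * (betaAff l P Q) ^ 2 ≤ δ := by
    have expand : (D * betaAff l P Q) ^ 2 = D * (D * (betaAff l P Q) ^ 2) := by ring
    rw [expand] at hsq
    nlinarith [hD0, sq_nonneg (betaAff l P Q)]
  calc (1 / 4) * pr ^ l * (1 - pr) ^ (1 - l) * (betaAff l P Q) ^ 2
      = (1 / 4) * D * (betaAff l P Q) ^ 2 := by rw [hD]; ring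
    _ ≤ δ := hfinal
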